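/- Let L be a language with a unary connective ¬ and binary connectives ∨ and ∧, F the set of all wffs of L, and ⟨F, 𝒱, ⊨⟩ a semantic structure satisfying (A3), (A1), (A0), and (A2). Let |~ be a relation on P(F) × F. Then |~ is a universe-codefinable pivotal-discriminative consequence relation if and only if |~ satisfies conditions (|~0), (|~6), (|~7), (|~8), (|~11), and (|~12). -/

import Mathlib

/-- The set of models of a set of formulas `Γ`. -/
def modSet {F V : Type*} (sat : V → F → Prop) (Γ : Set F) : Set V :=
  {v | ∀ α ∈ Γ, sat v α}

/-- The set of formulas satisfied in every valuation of `S`. -/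
def thSet {F V : Type*} (sat : V → F → Prop) (S : Set V) : Set F :=
  {α | S ⊆ modSet sat {α}}

/-- `D`: the family of definable sets of valuations. -/
def defFam {F V : Type*} (sat : V → F → Prop) : Set (Set V) :=
  {S | ∃ Γ : Set F, modSet sat Γ = S}

/-- The basic consequence operator `C_⊢(Γ) = Th(Mod(Γ))`. -/
def cnsq {F V : Type*} (sat : V → F → Prop) (Γ : Set F) : Set F :=
  thSet sat (modSet sat Γ)

/-- `C_|~(Γ) = {α | Γ |~ α}`. -/
def relC {F : Type*} (rel : Set F → F → Prop) (Γ : Set F) : Set F :=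
  {α | rel Γ α}

/-- `𝐂`: the sets of valuations that do not satisfy both a formula and its negation. -/
def coFam {F V : Type*} (sat : V → F → Prop) (neg : F → F) : Set (Set V) :=
  {S | ∀ α, ¬(S ⊆ modSet sat {α} ∧ S ⊆ modSet sat {neg α})}

/-- `Γ` is consistent: for no `α` do we have both `Γ ⊢ α` and `Γ ⊢ ¬α`. -/
def isConsistent {F V : Type*} (sat : V → F → Prop) (neg : F → F) (Γ : Set F) : Prop :=
  ∀ α, ¬(modSet sat Γ ⊆ modSet sat {α} ∧ modSet sat Γ ⊆ modSet sat {neg α})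

/-- One step of the inductive construction of the sets `H_i(Γ)`:
`hStep … Γ B = {¬β : β ∈ C_⊢(B) \ C_|~(Γ) and ¬β ∉ C_⊢(B)}`. -/
def hStep {F V : Type*} (sat : V → F → Prop) (neg : F → F)
    (rel : Set F → F → Prop) (Γ B : Set F) : Set F :=
  {x | ∃ β, x = neg β ∧ β ∈ cnsq sat B ∧ β ∉ relC rel Γ ∧ neg β ∉ cnsq sat B}

/-- `hPrev … Γ n = Γ ∪ C_|~(Γ) ∪ H_1(Γ) ∪ … ∪ H_n(Γ)`. -/
def hPrev {F V : Type*} (sat : V → F → Prop) (neg : F → F)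
    (rel : Set F → F → Prop) (Γ : Set F) : ℕ → Set F
  | 0 => Γ ∪ relC rel Γ
  | n + 1 => hPrev sat neg rel Γ n ∪ hStep sat neg rel Γ (hPrev sat neg rel Γ n)

/-- `H(Γ) = ⋃_{i ≥ 1} H_i(Γ)`, where `H_{n+1}(Γ) = hStep … Γ (hPrev … Γ n)`. -/
def hSet {F V : Type*} (sat : V → F → Prop) (neg : F → F)
    (rel : Set F → F → Prop) (Γ : Set F) : Set F :=
  ⋃ n : ℕ, hStep sat neg rel Γ (hPrev sat neg rel Γ n)

/-- Assumption `(A2)`. -/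
def assumpA2 {F V : Type*} (sat : V → F → Prop) (neg : F → F) : Prop :=
  ∀ (Γ : Set F) (α : F), α ∉ cnsq sat Γ → neg α ∉ cnsq sat Γ →
    ¬(modSet sat Γ ∩ modSet sat {α} ⊆ modSet sat {neg α})

/-- Assumption `(A3)`. -/
def assumpA3 {F V : Type*} (sat : V → F → Prop) (neg : F → F)
    (disj conj : F → F → F) : Prop :=
  ∀ α β : F,
    modSet sat {disj α β} = modSet sat {α} ∪ modSet sat {β} ∧
    modSet sat {conj α β} = modSet sat {α} ∩ modSet sat {β} ∧
    modSet sat {neg (neg α)} = modSet sat {α} ∧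
    modSet sat {neg (disj α β)} = modSet sat {conj (neg α) (neg β)} ∧
    modSet sat {neg (conj α β)} = modSet sat {disj (neg α) (neg β)}

/-- Condition `(|~0)`. -/
def cond0 {F V : Type*} (sat : V → F → Prop) (rel : Set F → F → Prop) : Prop :=
  ∀ Γ Δ : Set F, cnsq sat Γ = cnsq sat Δ → relC rel Γ = relC rel Δ

/-- Condition `(|~6)`. -/
def cond6 {F V : Type*} (sat : V → F → Prop) (neg : F → F)
    (rel : Set F → F → Prop) : Prop :=
  ∀ (Γ : Set F) (α β : F),
    β ∈ cnsq sat (Γ ∪ relC rel Γ) → β ∉ relC rel Γ →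
    neg α ∈ cnsq sat (Γ ∪ relC rel Γ ∪ {neg β}) → α ∉ relC rel Γ

/-- Condition `(|~7)`. -/
def cond7 {F V : Type*} (sat : V → F → Prop) (neg : F → F) (disj : F → F → F)
    (rel : Set F → F → Prop) : Prop :=
  ∀ (Γ : Set F) (α β : F),
    α ∈ cnsq sat (Γ ∪ relC rel Γ) → α ∉ relC rel Γ →
    β ∈ cnsq sat (Γ ∪ relC rel Γ ∪ {neg α}) → β ∉ relC rel Γ →
    disj α β ∉ relC rel Γ

/-- Condition `(|~8)`. -/
def cond8 {F V : Type*} (sat : V → F → Prop) (neg : F → F)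
    (rel : Set F → F → Prop) : Prop :=
  ∀ (Γ : Set F) (α : F), α ∈ relC rel Γ → neg α ∉ cnsq sat (Γ ∪ relC rel Γ)

/-- Condition `(|~9)`. -/
def cond9 {F V : Type*} (sat : V → F → Prop) (neg : F → F)
    (rel : Set F → F → Prop) : Prop :=
  ∀ Γ Δ : Set F, relC rel Γ ∪ hSet sat neg rel Γ ⊆
    cnsq sat (Δ ∪ relC rel Δ ∪ hSet sat neg rel Δ ∪ Γ)

/-- Condition `(|~10)`. -/
def cond10 {F V : Type*} (sat : V → F → Prop) (neg : F → F)
    (rel : Set F → F → Prop) : Prop :=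
  ∀ Γ : Set F, isConsistent sat neg Γ →
    isConsistent sat neg (relC rel Γ) ∧ Γ ⊆ relC rel Γ ∧
      cnsq sat (relC rel Γ) = relC rel Γ

/-- Condition `(|~11)`. -/
def cond11 {F V : Type*} (sat : V → F → Prop) (neg : F → F)
    (rel : Set F → F → Prop) : Prop :=
  ∀ Γ : Set F, cnsq sat (Γ ∪ relC rel Γ ∪ hSet sat neg rel Γ) =
    thSet sat {v ∈ modSet sat Γ | ∀ Δ : Set F, v ∈ modSet sat Δ →
      v ∈ modSet sat (relC rel Δ ∪ hSet sat neg rel Δ)}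

/-- Condition `(|~12)`. -/
def cond12 {F V : Type*} (sat : V → F → Prop) (neg : F → F)
    (rel : Set F → F → Prop) : Prop :=
  Set.univ \ {v : V | ∀ Δ : Set F, v ∈ modSet sat Δ →
    v ∈ modSet sat (relC rel Δ ∪ hSet sat neg rel Δ)} ∈ defFam sat

namespace Stmt15


variable {F V : Type*} (sat : V → F → Prop) (neg : F → F) (disj conj : F → F → F)
  (rel : Set F → F → Prop)

lemma mem_modSet_singleton {α : F} {v : V} : v ∈ modSet sat {α} ↔ sat v α := by
  simp [modSet]

lemma modSet_anti {Γ Δ : Set F} (h : Γ ⊆ Δ) : modSet sat Δ ⊆ modSet sat Γ :=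
  fun _ hv α hα => hv α (h hα)

lemma modSet_union (Γ Δ : Set F) :
    modSet sat (Γ ∪ Δ) = modSet sat Γ ∩ modSet sat Δ := by
  ext v; simp [modSet, or_imp, forall_and]

lemma mem_cnsq {Γ : Set F} {α : F} :
    α ∈ cnsq sat Γ ↔ modSet sat Γ ⊆ modSet sat {α} := Iff.rfl

lemma subset_cnsq (Γ : Set F) : Γ ⊆ cnsq sat Γ := by
  intro γ hγ
  rw [mem_cnsq]
  intro v hv
  rw [mem_modSet_singleton]
  exact hv γ hγ

lemma modSet_cnsq (Γ : Set F) : modSet sat (cnsq sat Γ) = modSet sat Γ := by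
  apply subset_antisymm (modSet_anti sat (subset_cnsq sat Γ))
  intro v hv α hα
  exact (mem_modSet_singleton sat).1 (hα hv)

lemma cnsq_congr {Γ Δ : Set F} (h : modSet sat Γ = modSet sat Δ) :
    cnsq sat Γ = cnsq sat Δ := by
  unfold cnsq; rw [h]

lemma modSet_eq_biInter (Γ : Set F) :
    modSet sat Γ = ⋂ α ∈ Γ, modSet sat {α} := by
  ext v; simp [modSet]

lemma hPrev_mono (Γ : Set F) : Monotone (hPrev sat neg rel Γ) :=
  monotone_nat_of_le_succ (fun _ => Set.subset_union_left)

lemma hStep_congr {Γ B B' : Set F} (h : cnsq sat B = cnsq sat B') :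
    hStep sat neg rel Γ B = hStep sat neg rel Γ B' := by
  unfold hStep; rw [h]

/-- stabilization -/
lemma exists_fixK [Finite V] (Γ : Set F) :
    ∃ K, hStep sat neg rel Γ (hPrev sat neg rel Γ K) ⊆ hPrev sat neg rel Γ K ∧
      Γ ∪ relC rel Γ ∪ hSet sat neg rel Γ = hPrev sat neg rel Γ K := by
  classical
  obtain ⟨i, j, hne, he⟩ :=
    Finite.exists_ne_map_eq_of_infinite (fun n => modSet sat (hPrev sat neg rel Γ n))
  wlog hij : i < j generalizing i j
  · exact this j i hne.symm he.symm (by omega)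
  have hstep1 : modSet sat (hPrev sat neg rel Γ i)
      = modSet sat (hPrev sat neg rel Γ (i+1)) := by
    apply subset_antisymm _ (modSet_anti sat (hPrev_mono sat neg rel Γ (Nat.le_succ i)))
    calc modSet sat (hPrev sat neg rel Γ i) = modSet sat (hPrev sat neg rel Γ j) := he
    _ ⊆ modSet sat (hPrev sat neg rel Γ (i+1)) := modSet_anti sat (hPrev_mono sat neg rel Γ hij)
  have hc : cnsq sat (hPrev sat neg rel Γ (i+1)) = cnsq sat (hPrev sat neg rel Γ i) :=
    cnsq_congr sat hstep1.symm
  have hfix : hStep sat neg rel Γ (hPrev sat neg rel Γ (i+1)) ⊆ hPrev sat neg rel Γ (i+1) := by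
    rw [hStep_congr sat neg rel hc]
    exact Set.subset_union_right
  refine ⟨i+1, hfix, ?_⟩
  have hconst : ∀ n, i + 1 ≤ n → hPrev sat neg rel Γ n = hPrev sat neg rel Γ (i+1) := by
    intro n hn
    induction n with
    | zero => omega
    | succ m ih =>
      rcases Nat.lt_or_ge (i+1) (m+1) with h' | h'
      · have hm := ih (by omega)
        show hPrev sat neg rel Γ m ∪ _ = _
        rw [hm]
        exact Set.union_eq_self_of_subset_right hfix
      · have : i + 1 = m + 1 := by omega
        rw [this]
  have hUnion : (⋃ n, hPrev sat neg rel Γ n) = hPrev sat neg rel Γ (i+1) := by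
    apply subset_antisymm
    · apply Set.iUnion_subset
      intro n
      rcases Nat.le_total n (i+1) with h' | h'
      · exact hPrev_mono sat neg rel Γ h'
      · exact (hconst n h').le
    · exact Set.subset_iUnion _ (i+1)
  rw [← hUnion]
  apply subset_antisymm
  · apply Set.union_subset
    · exact (Set.subset_iUnion (hPrev sat neg rel Γ) 0 : _)
    · apply Set.iUnion_subset
      intro n
      exact (Set.subset_union_right).trans (Set.subset_iUnion (hPrev sat neg rel Γ) (n+1))
  · apply Set.iUnion_subset
    intro n
    induction n with
    | zero => exact Set.subset_union_left
    | succ m ih =>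
      apply Set.union_subset ih
      exact (Set.subset_iUnion (fun k => hStep sat neg rel Γ (hPrev sat neg rel Γ k)) m).trans
        Set.subset_union_right

lemma fix_prop {Γ : Set F} {K : ℕ}
    (hfix : hStep sat neg rel Γ (hPrev sat neg rel Γ K) ⊆ hPrev sat neg rel Γ K)
    {γ : F} (h1 : γ ∈ cnsq sat (hPrev sat neg rel Γ K)) (h2 : γ ∉ relC rel Γ) :
    neg γ ∈ cnsq sat (hPrev sat neg rel Γ K) := by
  by_contra h3
  exact h3 (subset_cnsq sat _ (hfix ⟨γ, rfl, h1, h2, h3⟩))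

/-- finite sub-intersection -/
lemma exists_fin_inter [Finite V] (A : Set V) (P : Set F) (f : F → Set V) :
    ∃ s : Set F, s.Finite ∧ s ⊆ P ∧ (A ∩ ⋂ β ∈ P, f β) = (A ∩ ⋂ β ∈ s, f β) := by
  classical
  set C := A \ ⋂ β ∈ P, f β with hC
  have key : ∀ v : C, ∃ β, β ∈ P ∧ (v : V) ∉ f β := by
    rintro ⟨v, hv1, hv2⟩
    simpa using hv2
  choose g hg1 hg2 using key
  refine ⟨Set.range g, Set.finite_range g, ?_, ?_⟩
  · rintro _ ⟨v, rfl⟩; exact hg1 v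
  · apply subset_antisymm
    · apply Set.inter_subset_inter_right
      intro v hv
      simp only [Set.mem_iInter] at hv ⊢
      rintro _ ⟨u, rfl⟩
      exact hv _ (hg1 u)
    · rintro v ⟨hvA, hvs⟩
      refine ⟨hvA, ?_⟩
      by_contra hvP
      have hvC : v ∈ C := ⟨hvA, hvP⟩
      have := hg2 ⟨v, hvC⟩
      apply this
      simp only [Set.mem_iInter] at hvs
      exact hvs _ ⟨⟨v, hvC⟩, rfl⟩



variable {F V : Type*} (sat : V → F → Prop) (neg : F → F) (disj conj : F → F → F)
  (rel : Set F → F → Prop)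

lemma modSet_hStep (Γ B : Set F) :
    modSet sat (hStep sat neg rel Γ B) =
      ⋂ β ∈ {β | β ∈ cnsq sat B ∧ β ∉ relC rel Γ ∧ neg β ∉ cnsq sat B},
        modSet sat {neg β} := by
  ext v
  simp only [modSet, hStep, Set.mem_setOf_eq, Set.mem_iInter, Set.mem_singleton_iff,
    forall_eq]
  constructor
  · intro h β hβ
    exact h (neg β) ⟨β, rfl, hβ.1, hβ.2.1, hβ.2.2⟩
  · rintro h x ⟨β, rfl, h1, h2, h3⟩
    exact h β ⟨h1, h2, h3⟩

lemma dichot [Finite V] (hA3 : assumpA3 sat neg disj conj)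
    (h7 : cond7 sat neg disj rel) (Γ : Set F) (n : ℕ) :
    modSet sat (hPrev sat neg rel Γ n) = modSet sat (Γ ∪ relC rel Γ) ∨
      ∃ δ, δ ∈ cnsq sat (Γ ∪ relC rel Γ) ∧ δ ∉ relC rel Γ ∧
        modSet sat (Γ ∪ relC rel Γ) ∩ modSet sat {neg δ} =
          modSet sat (hPrev sat neg rel Γ n) := by
  induction n with
  | zero => left; rfl
  | succ m ih =>
    set Q : Set F := {β | β ∈ cnsq sat (hPrev sat neg rel Γ m) ∧ β ∉ relC rel Γ ∧
        neg β ∉ cnsq sat (hPrev sat neg rel Γ m)} with hQ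
    have hmod : modSet sat (hPrev sat neg rel Γ (m+1)) =
        modSet sat (hPrev sat neg rel Γ m) ∩ ⋂ β ∈ Q, modSet sat {neg β} := by
      rw [show hPrev sat neg rel Γ (m+1) = hPrev sat neg rel Γ m ∪
          hStep sat neg rel Γ (hPrev sat neg rel Γ m) from rfl,
        modSet_union, modSet_hStep]
    obtain ⟨s, hsfin, hsQ, hseq⟩ := exists_fin_inter
      (modSet sat (hPrev sat neg rel Γ m)) Q (fun β => modSet sat {neg β})
    rw [hmod, hseq]
    clear hseq hmod
    have main : ∀ s : Set F, s.Finite → s ⊆ Q →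
        (modSet sat (hPrev sat neg rel Γ m) ∩ ⋂ β ∈ s, modSet sat {neg β} =
           modSet sat (Γ ∪ relC rel Γ) ∨
         ∃ δ, δ ∈ cnsq sat (Γ ∪ relC rel Γ) ∧ δ ∉ relC rel Γ ∧
           modSet sat (Γ ∪ relC rel Γ) ∩ modSet sat {neg δ} =
             modSet sat (hPrev sat neg rel Γ m) ∩ ⋂ β ∈ s, modSet sat {neg β}) := by
      intro s hsfin
      induction s, hsfin using Set.Finite.induction_on with
      | empty =>
        intro _
        simpa using ih
      | @insert a s ha hsf ihs =>
        intro hsub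
        have haQ : a ∈ Q := hsub (Set.mem_insert a s)
        have hsQ' : s ⊆ Q := fun x hx => hsub (Set.mem_insert_of_mem a hx)
        have hrw : modSet sat (hPrev sat neg rel Γ m) ∩ ⋂ β ∈ insert a s, modSet sat {neg β}
            = (modSet sat (hPrev sat neg rel Γ m) ∩ ⋂ β ∈ s, modSet sat {neg β})
              ∩ modSet sat {neg a} := by
          rw [Set.biInter_insert]
          ext v
          simp only [Set.mem_inter_iff, Set.mem_iInter]
          tauto
        rw [hrw]
        set X := modSet sat (hPrev sat neg rel Γ m) ∩ ⋂ β ∈ s, modSet sat {neg β} with hX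
        have hXsub : X ⊆ modSet sat (hPrev sat neg rel Γ m) := Set.inter_subset_left
        have hXa : X ⊆ modSet sat {a} := hXsub.trans ((mem_cnsq sat).1 haQ.1)
        rcases ihs hsQ' with hcase | ⟨δ, h1, h2, h3⟩
        · right
          refine ⟨a, ?_, haQ.2.1, ?_⟩
          · rw [mem_cnsq]; rw [← hcase]; exact hXa
          · rw [hcase]
        · right
          refine ⟨disj δ a, ?_, ?_, ?_⟩
          · rw [mem_cnsq, (hA3 δ a).1]
            exact fun v hv => Or.inl ((mem_cnsq sat).1 h1 hv)
          · apply h7 Γ δ a h1 h2 _ haQ.2.1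
            rw [mem_cnsq, modSet_union, h3]
            exact hXa
          · rw [(hA3 δ a).2.2.2.1, (hA3 (neg δ) (neg a)).2.1, ← Set.inter_assoc, h3]
    exact main s hsfin hsQ

lemma rel_iff [Finite V] (hA3 : assumpA3 sat neg disj conj)
    (h6 : cond6 sat neg rel) (h7 : cond7 sat neg disj rel) (h8 : cond8 sat neg rel)
    (Γ : Set F) {K : ℕ}
    (hfix : hStep sat neg rel Γ (hPrev sat neg rel Γ K) ⊆ hPrev sat neg rel Γ K)
    (α : F) :
    rel Γ α ↔ (α ∈ cnsq sat (hPrev sat neg rel Γ K) ∧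
      neg α ∉ cnsq sat (hPrev sat neg rel Γ K)) := by
  constructor
  · intro hα
    have hmem : α ∈ hPrev sat neg rel Γ K :=
      hPrev_mono sat neg rel Γ (Nat.zero_le K) (Or.inr hα)
    refine ⟨subset_cnsq sat _ hmem, ?_⟩
    intro hn
    rcases dichot sat neg disj conj rel hA3 h7 Γ K with hcase | ⟨δ, h1, h2, h3⟩
    · have : neg α ∈ cnsq sat (Γ ∪ relC rel Γ) := by
        rw [mem_cnsq, ← hcase]; exact (mem_cnsq sat).1 hn
      exact h8 Γ α hα this
    · have : neg α ∈ cnsq sat (Γ ∪ relC rel Γ ∪ {neg δ}) := by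
        rw [mem_cnsq, modSet_union, h3]
        exact (mem_cnsq sat).1 hn
      exact h6 Γ α δ h1 h2 this hα
  · rintro ⟨h1, h2⟩
    by_contra hα
    exact h2 (fix_prop sat neg rel hfix h1 hα)

lemma lemA (M : Set V)
    (hrel : ∀ (Γ : Set F) (α : F), rel Γ α ↔
      (modSet sat Γ ∩ M ⊆ modSet sat {α} ∧ ¬(modSet sat Γ ∩ M ⊆ modSet sat {neg α})))
    (Δ : Set F) : ∀ n, modSet sat Δ ∩ M ⊆ modSet sat (hPrev sat neg rel Δ n) := by
  intro n
  induction n with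
  | zero =>
    rintro v hv α (hα | hα)
    · exact hv.1 α hα
    · exact (mem_modSet_singleton sat).1 ((((hrel Δ α).1 hα).1) hv)
  | succ m ih =>
    rintro v hv α (hα | hα)
    · exact ih hv α hα
    · obtain ⟨β, rfl, hb1, hb2, hb3⟩ := hα
      have hμβ : modSet sat Δ ∩ M ⊆ modSet sat {β} :=
        ih.trans ((mem_cnsq sat).1 hb1)
      have : modSet sat Δ ∩ M ⊆ modSet sat {neg β} := by
        by_contra hcon
        exact hb2 ((hrel Δ β).2 ⟨hμβ, hcon⟩)
      exact (mem_modSet_singleton sat).1 (this hv)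

lemma lemB [Finite V] (hA2 : assumpA2 sat neg) (hA3 : assumpA3 sat neg disj conj)
    (M : Set V)
    (hrel : ∀ (Γ : Set F) (α : F), rel Γ α ↔
      (modSet sat Γ ∩ M ⊆ modSet sat {α} ∧ ¬(modSet sat Γ ∩ M ⊆ modSet sat {neg α})))
    (Δ : Set F) {K : ℕ}
    (hfix : hStep sat neg rel Δ (hPrev sat neg rel Δ K) ⊆ hPrev sat neg rel Δ K) :
    ∀ β, modSet sat Δ ∩ M ⊆ modSet sat {β} →
      modSet sat (hPrev sat neg rel Δ K) ⊆ modSet sat {β} := by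
  by_contra hcon
  push_neg at hcon
  obtain ⟨β₀, hβ₀, hW0⟩ := hcon
  set W := modSet sat (hPrev sat neg rel Δ K) with hW
  set T : Set F := {β | modSet sat Δ ∩ M ⊆ modSet sat {β}} with hT
  set ns : Set ℕ := {n | ∃ β ∈ T, (W ∩ modSet sat {β}).ncard = n} with hns
  have hne : ns.Nonempty := ⟨_, β₀, hβ₀, rfl⟩
  obtain ⟨βs, hβs, hcard⟩ := Nat.sInf_mem hne
  have hmin : ∀ β ∈ T, (W ∩ modSet sat {βs}).ncard ≤ (W ∩ modSet sat {β}).ncard := by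
    intro β hβ; rw [hcard]; exact Nat.sInf_le ⟨β, hβ, rfl⟩
  have f1 : ∀ β ∈ T, W ∩ modSet sat {βs} ⊆ modSet sat {β} := by
    intro β hβ
    have hconj : conj βs β ∈ T := by
      show modSet sat Δ ∩ M ⊆ modSet sat {conj βs β}
      rw [(hA3 βs β).2.1]
      exact Set.subset_inter hβs hβ
    have hsub : W ∩ modSet sat {conj βs β} ⊆ W ∩ modSet sat {βs} := by
      rw [(hA3 βs β).2.1]
      exact fun v hv => ⟨hv.1, hv.2.1⟩
    have heq : W ∩ modSet sat {conj βs β} = W ∩ modSet sat {βs} :=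
      Set.eq_of_subset_of_ncard_le hsub (hmin _ hconj)
    rw [← heq, (hA3 βs β).2.1]
    exact fun v hv => hv.2.2
  have f3 : ¬ W ⊆ modSet sat {βs} := fun h => hW0 (fun v hv => f1 β₀ hβ₀ ⟨hv, h hv⟩)
  have f5 : βs ∉ cnsq sat (hPrev sat neg rel Δ K) := fun h => f3 ((mem_cnsq sat).1 h)
  have f2 : βs ∉ relC rel Δ := by
    intro h
    exact f5 (subset_cnsq sat _ (hPrev_mono sat neg rel Δ (Nat.zero_le K) (Or.inr h)))
  have hnegT : neg βs ∈ T := by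
    by_contra hcon2
    exact f2 ((hrel Δ βs).2 ⟨hβs, hcon2⟩)
  have f1n : W ∩ modSet sat {βs} ⊆ modSet sat {neg βs} := f1 _ hnegT
  have f4 : neg βs ∉ cnsq sat (hPrev sat neg rel Δ K) := by
    intro h
    have hnr : neg βs ∉ relC rel Δ := by
      intro hr
      apply ((hrel Δ (neg βs)).1 hr).2
      rw [(hA3 βs βs).2.2.1]
      exact hβs
    have h5 := (mem_cnsq sat).1 (fix_prop sat neg rel hfix h hnr)
    rw [(hA3 βs βs).2.2.1] at h5
    exact f3 h5
  exact hA2 _ βs f5 f4 f1n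


end Stmt15

/-- Under `(A3)`, `(A1)`, `(A0)`, and `(A2)`, `|~` is a
universe-codefinable pivotal-discriminative consequence relation iff it satisfies
`(|~0)`, `(|~6)`, `(|~7)`, `(|~8)`, `(|~11)`, and `(|~12)`. -/
theorem stmt15 {F V : Type*} (neg : F → F) (disj conj : F → F → F)
    (sat : V → F → Prop)
    (hA3 : assumpA3 sat neg disj conj) (hA1 : Finite V)
    (hA0 : modSet sat (Set.univ : Set F) = ∅)
    (hA2 : assumpA2 sat neg)
    (rel : Set F → F → Prop) :
    (∃ μ : Set V → Set V,
        (∀ A ∈ defFam sat, μ A ⊆ A) ∧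
        (∀ A ∈ defFam sat, ∀ B ∈ defFam sat, μ B ∩ A ⊆ μ A) ∧
        Set.univ \ μ Set.univ ∈ defFam sat ∧
        (∀ (Γ : Set F) (α : F), rel Γ α ↔
          (μ (modSet sat Γ) ⊆ modSet sat {α} ∧
            ¬ μ (modSet sat Γ) ⊆ modSet sat {neg α}))) ↔
      (cond0 sat rel ∧ cond6 sat neg rel ∧ cond7 sat neg disj rel ∧
        cond8 sat neg rel ∧ cond11 sat neg rel ∧ cond12 sat neg rel) := by
  haveI : Finite V := hA1
  constructor
  · -- forward direction: from μ derive the conditions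
    rintro ⟨μ, hsub, hSC, hUC, hrelμ⟩
    have hunivD : (Set.univ : Set V) ∈ defFam sat := ⟨∅, by ext v; simp [modSet]⟩
    have hmodD : ∀ Γ : Set F, modSet sat Γ ∈ defFam sat := fun Γ => ⟨Γ, rfl⟩
    set M := μ Set.univ with hMdef
    have hμ : ∀ A ∈ defFam sat, μ A = A ∩ M := by
      intro A hA
      apply subset_antisymm
      · refine Set.subset_inter (hsub A hA) ?_
        intro x hx
        exact hSC Set.univ hunivD A hA ⟨hx, trivial⟩
      · intro x hx
        exact hSC A hA Set.univ hunivD ⟨hx.2, hx.1⟩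
    have hrel' : ∀ (Γ : Set F) (α : F), rel Γ α ↔
        (modSet sat Γ ∩ M ⊆ modSet sat {α} ∧
          ¬(modSet sat Γ ∩ M ⊆ modSet sat {neg α})) := by
      intro Γ α
      rw [hrelμ Γ α, hμ _ (hmodD Γ)]
    choose K hfixK hunionK using fun Δ : Set F => Stmt15.exists_fixK sat neg rel Δ
    have hlemA := Stmt15.lemA sat neg rel M hrel'
    have hlemB : ∀ (Δ : Set F) (β : F), modSet sat Δ ∩ M ⊆ modSet sat {β} →
        modSet sat (hPrev sat neg rel Δ (K Δ)) ⊆ modSet sat {β} :=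
      fun Δ => Stmt15.lemB sat neg disj conj rel hA2 hA3 M hrel' Δ (hfixK Δ)
    -- the set of valuations that belong to M, characterized intrinsically
    have hMN : ∀ v ∈ M, ∀ Δ : Set F, v ∈ modSet sat Δ →
        v ∈ modSet sat (relC rel Δ ∪ hSet sat neg rel Δ) := by
      intro v hvM Δ hvΔ x hx
      rcases hx with hx | hx
      · exact (Stmt15.mem_modSet_singleton sat).1 ((((hrel' Δ x).1 hx).1) ⟨hvΔ, hvM⟩)
      · simp only [hSet, Set.mem_iUnion, Set.mem_setOf_eq] at hx
        obtain ⟨n, β, rfl, hb1, hb2, hb3⟩ := hx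
        have hμβ : modSet sat Δ ∩ M ⊆ modSet sat {β} :=
          (hlemA Δ n).trans ((Stmt15.mem_cnsq sat).1 hb1)
        have hμnβ : modSet sat Δ ∩ M ⊆ modSet sat {neg β} := by
          by_contra hcon
          exact hb2 ((hrel' Δ β).2 ⟨hμβ, hcon⟩)
        exact (Stmt15.mem_modSet_singleton sat).1 (hμnβ ⟨hvΔ, hvM⟩)
    obtain ⟨Θ, hΘ⟩ := hUC
    have hNM : ∀ v : V, (∀ Δ : Set F, v ∈ modSet sat Δ →
        v ∈ modSet sat (relC rel Δ ∪ hSet sat neg rel Δ)) → v ∈ M := by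
      intro v hv
      by_contra hvM
      have hvΘ : v ∈ modSet sat Θ := by rw [hΘ]; exact ⟨trivial, hvM⟩
      have hv2 := hv Θ hvΘ
      have hvW : v ∈ modSet sat (hPrev sat neg rel Θ (K Θ)) := by
        rw [← hunionK Θ]
        intro x hx
        rcases hx with (hx | hx) | hx
        · exact hvΘ x hx
        · exact hv2 x (Or.inl hx)
        · exact hv2 x (Or.inr hx)
      have hempty : modSet sat Θ ∩ M ⊆ modSet sat {v' : F | False} := by
        rintro x ⟨hx1, hx2⟩
        rw [hΘ] at hx1
        exact absurd hx2 hx1.2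
      have hall : ∀ β : F, modSet sat (hPrev sat neg rel Θ (K Θ)) ⊆ modSet sat {β} := by
        intro β
        apply hlemB Θ β
        rintro x ⟨hx1, hx2⟩
        rw [hΘ] at hx1
        exact absurd hx2 hx1.2
      have hvuniv : v ∈ modSet sat (Set.univ : Set F) := by
        intro α _
        exact (Stmt15.mem_modSet_singleton sat).1 (hall α hvW)
      rw [hA0] at hvuniv
      exact hvuniv
    refine ⟨?_, ?_, ?_, ?_, ?_, ?_⟩
    · -- cond0
      intro Γ Δ h
      have hmeq : modSet sat Γ = modSet sat Δ := by
        rw [← Stmt15.modSet_cnsq sat Γ, ← Stmt15.modSet_cnsq sat Δ, h]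
      ext α
      simp only [relC, Set.mem_setOf_eq]
      rw [hrel' Γ α, hrel' Δ α, hmeq]
    · -- cond6
      intro Γ α β hb1 hb2 hna hα
      have hμ0 : modSet sat Γ ∩ M ⊆ modSet sat (Γ ∪ relC rel Γ) := hlemA Γ 0
      have hβ : modSet sat Γ ∩ M ⊆ modSet sat {β} :=
        hμ0.trans ((Stmt15.mem_cnsq sat).1 hb1)
      have hnβ : modSet sat Γ ∩ M ⊆ modSet sat {neg β} := by
        by_contra hcon
        exact hb2 ((hrel' Γ β).2 ⟨hβ, hcon⟩)
      have hsub2 : modSet sat Γ ∩ M ⊆ modSet sat (Γ ∪ relC rel Γ ∪ {neg β}) := by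
        intro v hv x hx
        rcases hx with hx | hx
        · exact hμ0 hv x hx
        · rcases hx with rfl
          exact (Stmt15.mem_modSet_singleton sat).1 (hnβ hv)
      have hnα : modSet sat Γ ∩ M ⊆ modSet sat {neg α} :=
        hsub2.trans ((Stmt15.mem_cnsq sat).1 hna)
      exact ((hrel' Γ α).1 hα).2 hnα
    · -- cond7
      intro Γ α β h1 h2 h3 h4 hd
      have hμ0 : modSet sat Γ ∩ M ⊆ modSet sat (Γ ∪ relC rel Γ) := hlemA Γ 0
      have hα : modSet sat Γ ∩ M ⊆ modSet sat {α} :=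
        hμ0.trans ((Stmt15.mem_cnsq sat).1 h1)
      have hnα : modSet sat Γ ∩ M ⊆ modSet sat {neg α} := by
        by_contra hcon
        exact h2 ((hrel' Γ α).2 ⟨hα, hcon⟩)
      have hsub2 : modSet sat Γ ∩ M ⊆ modSet sat (Γ ∪ relC rel Γ ∪ {neg α}) := by
        intro v hv x hx
        rcases hx with hx | hx
        · exact hμ0 hv x hx
        · rcases hx with rfl
          exact (Stmt15.mem_modSet_singleton sat).1 (hnα hv)
      have hβ : modSet sat Γ ∩ M ⊆ modSet sat {β} :=
        hsub2.trans ((Stmt15.mem_cnsq sat).1 h3)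
      have hnβ : modSet sat Γ ∩ M ⊆ modSet sat {neg β} := by
        by_contra hcon
        exact h4 ((hrel' Γ β).2 ⟨hβ, hcon⟩)
      apply ((hrel' Γ (disj α β)).1 hd).2
      rw [(hA3 α β).2.2.2.1, (hA3 (neg α) (neg β)).2.1]
      exact Set.subset_inter hnα hnβ
    · -- cond8
      intro Γ α hα hna
      exact ((hrel' Γ α).1 hα).2 ((hlemA Γ 0).trans ((Stmt15.mem_cnsq sat).1 hna))
    · -- cond11
      intro Γ
      have hL : cnsq sat (Γ ∪ relC rel Γ ∪ hSet sat neg rel Γ) =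
          cnsq sat (hPrev sat neg rel Γ (K Γ)) := by rw [hunionK Γ]
      have hsep : {v ∈ modSet sat Γ | ∀ Δ : Set F, v ∈ modSet sat Δ →
          v ∈ modSet sat (relC rel Δ ∪ hSet sat neg rel Δ)} = modSet sat Γ ∩ M := by
        ext v
        constructor
        · rintro ⟨hv1, hv2⟩
          exact ⟨hv1, hNM v hv2⟩
        · rintro ⟨hv1, hv2⟩
          exact ⟨hv1, hMN v hv2⟩
      rw [hL, hsep]
      ext β
      constructor
      · intro h
        exact (hlemA Γ (K Γ)).trans ((Stmt15.mem_cnsq sat).1 h)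
      · intro h
        exact hlemB Γ β h
    · -- cond12
      have hNeq : {v : V | ∀ Δ : Set F, v ∈ modSet sat Δ →
          v ∈ modSet sat (relC rel Δ ∪ hSet sat neg rel Δ)} = M := by
        ext v
        exact ⟨fun h => hNM v h, fun h => hMN v h⟩
      show Set.univ \ _ ∈ defFam sat
      rw [hNeq]
      exact ⟨Θ, hΘ⟩
  · -- backward direction: construct μ from the conditions
    rintro ⟨h0, h6, h7, h8, h11, h12⟩
    set N := {v : V | ∀ Δ : Set F, v ∈ modSet sat Δ →
      v ∈ modSet sat (relC rel Δ ∪ hSet sat neg rel Δ)} with hNdef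
    refine ⟨fun A => A ∩ N, fun A _ => Set.inter_subset_left,
      fun A _ B _ x hx => ⟨hx.2, hx.1.2⟩, ?_, ?_⟩
    · show Set.univ \ (Set.univ ∩ N) ∈ defFam sat
      rw [Set.univ_inter]
      exact h12
    · intro Γ α
      obtain ⟨Kg, hfix, huni⟩ := Stmt15.exists_fixK sat neg rel Γ
      have hsetEq : {v ∈ modSet sat Γ | ∀ Δ : Set F, v ∈ modSet sat Δ →
          v ∈ modSet sat (relC rel Δ ∪ hSet sat neg rel Δ)} = modSet sat Γ ∩ N := rfl
      have hcn : cnsq sat (Γ ∪ relC rel Γ ∪ hSet sat neg rel Γ) =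
          cnsq sat (hPrev sat neg rel Γ Kg) := by rw [huni]
      have hth : ∀ β : F, (modSet sat Γ ∩ N ⊆ modSet sat {β}) ↔
          β ∈ cnsq sat (hPrev sat neg rel Γ Kg) := by
        intro β
        rw [← hcn, h11 Γ, hsetEq]
        exact Iff.rfl
      rw [Stmt15.rel_iff sat neg disj conj rel hA3 h6 h7 h8 Γ hfix α,
        ← hth α, ← hth (neg α)]
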